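/- arXiv:1407.3860 — 3 statements merged into one kernel-verified Lean document; each statement's English description precedes it below -/
import Mathlib

section
/- Let Φ : X → Prop and E' be the equivalence relation on Set X given by: E'(A,B) iff (A and B are singletons {x}, {y} respectively with Φ(x) ↔ Φ(y)) or (neither is a singleton). Suppose ∂' : Set X → X satisfies ∂'(A) = ∂'(B) ↔ E'(A,B), and suppose Φ(x₀) holds for some x₀. Then {x : X | Φ(x)} = {x : X | ∂'({x}) = ∂'({x₀})}. -/
theorem abstraction_recovers_comprehension (X : Type*) (Φ : X → Prop)
    (d' : Set X → X)
    (hd' : ∀ A B : Set X, d' A = d' B ↔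
      ((∃ x y : X, A = {x} ∧ B = {y} ∧ (Φ x ↔ Φ y)) ∨
       (¬ (∃ x : X, A = {x}) ∧ ¬ (∃ y : X, B = {y}))))
    (x₀ : X) (hx₀ : Φ x₀) :
    {x : X | Φ x} = {x : X | d' {x} = d' {x₀}} := by
  ext x
  simp only [Set.mem_setOf_eq, hd' ({x} : Set X) {x₀}]
  constructor
  · intro h
    exact Or.inl ⟨x, x₀, rfl, rfl, iff_of_true h hx₀⟩
  · rintro (⟨a, b, ha, hb, hab⟩ | ⟨h1, _⟩)
    · rw [Set.singleton_eq_singleton_iff] at ha hb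
      subst ha hb
      exact hab.mpr hx₀
    · exact absurd ⟨x, rfl⟩ h1
end

section
/- Let Φ : X × Set X → Prop, let G : Set X be nonempty, suppose Φ(x₀, G) holds for some x₀, and let E be the equivalence relation on Set (X × X) defined via Φ (with E(R,S) iff both are uniquely {x}×G', {y}×H' with Φ(x,G') ↔ Φ(y,H'), or neither is uniquely such a product). If ∂ : Set (X × X) → X satisfies ∂(R) = ∂(S) ↔ E(R,S), then for all x: Φ(x, G) holds iff ∂({x} × G) = ∂({x₀} × G). -/
lemma prod_eq_unique {X : Type*} {x y : X} {G H : Set X} (hG : G.Nonempty)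
    (h : ({x} : Set X) ×ˢ G = ({y} : Set X) ×ˢ H) : x = y ∧ G = H := by
  obtain ⟨g, hg⟩ := hG
  have hxy : (x, g) ∈ ({y} : Set X) ×ˢ H := h ▸ ⟨rfl, hg⟩
  obtain ⟨hx, _⟩ := hxy
  subst hx
  refine ⟨rfl, ?_⟩
  ext a
  constructor
  · intro ha
    have : (x, a) ∈ ({x} : Set X) ×ˢ H := h ▸ ⟨rfl, ha⟩
    exact this.2
  · intro ha
    have : (x, a) ∈ ({x} : Set X) ×ˢ G := h.symm ▸ ⟨rfl, ha⟩
    exact this.2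

lemma prod_unique {X : Type*} (x : X) (G : Set X) (hG : G.Nonempty) :
    ∃! p : X × Set X, ({x} : Set X) ×ˢ G = {p.1} ×ˢ p.2 := by
  refine ⟨(x, G), rfl, ?_⟩
  rintro ⟨y, H⟩ h
  obtain ⟨h1, h2⟩ := prod_eq_unique hG h
  simp [h1, h2]

theorem abstraction_main_computation (X : Type*) (Φ : X × Set X → Prop)
    (G : Set X) (hG : G.Nonempty) (x₀ : X) (hx₀ : Φ (x₀, G))
    (d : Set (X × X) → X)
    (hd : ∀ R S : Set (X × X), d R = d S ↔
      (((∃! p : X × Set X, R = {p.1} ×ˢ p.2) ∧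
        (∃! p : X × Set X, S = {p.1} ×ˢ p.2) ∧
        (∀ (x : X) (G' : Set X) (y : X) (H' : Set X),
          R = {x} ×ˢ G' → S = {y} ×ˢ H' → (Φ (x, G') ↔ Φ (y, H')))) ∨
       (¬ (∃! p : X × Set X, R = {p.1} ×ˢ p.2) ∧
        ¬ (∃! p : X × Set X, S = {p.1} ×ˢ p.2)))) :
    ∀ x : X, Φ (x, G) ↔ d (({x} : Set X) ×ˢ G) = d (({x₀} : Set X) ×ˢ G) := by
  intro x
  constructor
  · intro hx
    rw [hd]
    left
    refine ⟨prod_unique x G hG, prod_unique x₀ G hG, ?_⟩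
    intro a G' b H' h1 h2
    obtain ⟨ha, hGa⟩ := prod_eq_unique hG h1
    obtain ⟨hb, hGb⟩ := prod_eq_unique hG h2
    subst ha hb hGa hGb
    exact ⟨fun _ => hx₀, fun _ => hx⟩
  · intro h
    rw [hd] at h
    rcases h with ⟨_, _, h⟩ | ⟨h, _⟩
    · exact (h x G x₀ G rfl rfl).mpr hx₀
    · exact absurd (prod_unique x G hG) h
end

section
/- Suppose for every predicate Φ : X → Prop there exists an abstraction operator ∂_Φ : Set X → X for the equivalence relation E'_Φ (where E'_Φ(A,B) iff A = {x}, B = {y} with Φ(x) ↔ Φ(y), or neither A nor B is a singleton). Then for every predicate Φ with a witness x₀ satisfying Φ(x₀), the set {x | Φ(x)} is definable as a preimage: {x | Φ(x)} = (fun x => ∂_Φ({x}))⁻¹' {∂_Φ({x₀})}. -/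
theorem abstraction_family_yields_comprehension (X : Type*)
    (d : (X → Prop) → Set X → X)
    (hd : ∀ (Φ : X → Prop) (A B : Set X), d Φ A = d Φ B ↔
      ((∃ x y : X, A = {x} ∧ B = {y} ∧ (Φ x ↔ Φ y)) ∨
       (¬ (∃ x : X, A = {x}) ∧ ¬ (∃ y : X, B = {y})))) :
    ∀ (Φ : X → Prop) (x₀ : X), Φ x₀ →
      {x : X | Φ x} = (fun x : X => d Φ {x}) ⁻¹' {d Φ {x₀}} := by
  intro Φ x₀ h₀
  ext x
  simp only [Set.mem_setOf_eq, Set.mem_preimage, Set.mem_singleton_iff, hd]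
  constructor
  · intro hx
    exact Or.inl ⟨x, x₀, rfl, rfl, by simp [hx, h₀]⟩
  · rintro (⟨a, b, ha, hb, hab⟩ | ⟨h1, _⟩)
    · have : a = x := (Set.singleton_eq_singleton_iff.mp ha.symm)
      have hb' : b = x₀ := (Set.singleton_eq_singleton_iff.mp hb.symm)
      subst this; subst hb'
      exact hab.mpr h₀
    · exact absurd ⟨x, rfl⟩ h1
end
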